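/- arXiv:1004.3655 — 3 statements merged into one kernel-verified Lean document; each statement's English description precedes it below -/
import Mathlib

section
/- (Transport lemma) Let A be a set, ℬ a finiteness space, and f ⊆ A × |ℬ| a relation such that f[{α}] ∈ F(ℬ) for all α ∈ A. Then 𝔗(ℬ,f) := {a ⊆ A : f[a] ∈ F(ℬ)} is a finiteness structure on A, and moreover 𝔗(ℬ,f) = ({f ÷ b : b ∈ F(ℬ)})^⊥⊥. -/
open Set

namespace FinitenessPaper

/-- The predual of a set `F` of subsets of `A`:
all subsets of `A` whose intersection with every member of `F` is finite. -/
def predual {α : Type*} (A : Set α) (F : Set (Set α)) : Set (Set α) :=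
  {a' | a' ⊆ A ∧ ∀ a ∈ F, (a ∩ a').Finite}

/-- A finiteness space: a web together with a finiteness structure on it. -/
structure FinSpace (α : Type*) where
  web : Set α
  fin : Set (Set α)
  isFin : predual web (predual web fin) = fin

/-- Direct image of a set under a relation. -/
def rimage {α β : Type*} (f : Set (α × β)) (a : Set α) : Set β := {y | ∃ x ∈ a, (x, y) ∈ f}

/-- Division of `b` by the relation `f`, relative to the domain `A`:
`{x ∈ A : f[{x}] ⊆ b}`. -/
def rdiv {α β : Type*} (A : Set α) (f : Set (α × β)) (b : Set β) : Set α :=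
  {x | x ∈ A ∧ ∀ y, (x, y) ∈ f → y ∈ b}

lemma predual_antitone {α : Type*} {A : Set α} {F G : Set (Set α)} (h : F ⊆ G) :
    predual A G ⊆ predual A F :=
  fun _ ha' => ⟨ha'.1, fun a ha => ha'.2 a (h ha)⟩

lemma subset_predual_predual {α : Type*} {A : Set α} {F : Set (Set α)}
    (h : ∀ a ∈ F, a ⊆ A) : F ⊆ predual A (predual A F) := by
  intro a ha
  refine ⟨h a ha, fun a' ha' => ?_⟩
  rw [inter_comm]
  exact ha'.2 a ha

lemma predual_mem_subset {α : Type*} {A : Set α} {F : Set (Set α)} :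
    ∀ a ∈ predual A F, a ⊆ A := fun _ ha => ha.1

lemma predual_triple {α : Type*} (A : Set α) (F : Set (Set α))
    (h : ∀ a ∈ F, a ⊆ A) :
    predual A (predual A (predual A F)) = predual A F := by
  apply subset_antisymm
  · exact predual_antitone (subset_predual_predual h)
  · exact subset_predual_predual (predual_mem_subset (A := A) (F := F))

/-- Transport lemma: if `f ⊆ A × |ℬ|` maps every element of `A` to a finitary
subset of `ℬ`, then `{a ⊆ A : f[a] ∈ F(ℬ)}` is a finiteness structure on `A`,
equal to `({f ÷ b : b ∈ F(ℬ)})^⊥⊥`. -/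
theorem transport {α β : Type*} (A : Set α) (B : FinSpace β)
    (f : Set (α × β)) (hf_sub : f ⊆ A ×ˢ B.web)
    (hf : ∀ x ∈ A, rimage f {x} ∈ B.fin) :
    predual A (predual A {a | a ⊆ A ∧ rimage f a ∈ B.fin})
        = {a | a ⊆ A ∧ rimage f a ∈ B.fin} ∧
    {a | a ⊆ A ∧ rimage f a ∈ B.fin}
        = predual A (predual A {d | ∃ b ∈ B.fin, d = rdiv A f b}) := by
  set T : Set (Set α) := {a | a ⊆ A ∧ rimage f a ∈ B.fin} with hT
  set D : Set (Set α) := {d | ∃ b ∈ B.fin, d = rdiv A f b} with hD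
  have key : T = predual A (predual A D) := by
    apply subset_antisymm
    · -- T ⊆ D^⊥⊥, using a ⊆ f ÷ f[a]
      rintro a ⟨haA, hfa⟩
      refine ⟨haA, fun a' ha' => ?_⟩
      have hd : rdiv A f (rimage f a) ∈ D := ⟨rimage f a, hfa, rfl⟩
      have hsub : a ⊆ rdiv A f (rimage f a) := by
        intro x hx
        exact ⟨haA hx, fun y hy => ⟨x, hx, hy⟩⟩
      rw [inter_comm]
      exact (ha'.2 _ hd).subset (inter_subset_inter_left a' hsub)
    · -- D^⊥⊥ ⊆ T
      rintro a ⟨haA, ha⟩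
      refine ⟨haA, ?_⟩
      rw [← B.isFin]
      have hfaw : rimage f a ⊆ B.web := by
        rintro y ⟨x, _, hxy⟩
        exact (hf_sub hxy).2
      refine ⟨hfaw, fun b' hb' => ?_⟩
      -- show (b' ∩ f[a]).Finite
      by_contra hinf
      replace hinf : (b' ∩ rimage f a).Infinite := hinf
      -- pick infinitely many distinct y_n with witnesses x_n ∈ a
      obtain ⟨e⟩ := hinf.nonempty.to_subtype
      set E := hinf.natEmbedding
      have hEmem : ∀ n : ℕ, (E n : β) ∈ b' ∩ rimage f a := fun n => (E n).2
      choose x hxa hxf using fun n => (hEmem n).2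
      have hEinj : Function.Injective (fun n => (E n : β)) :=
        fun m n h => E.injective (Subtype.ext h)
      set X : Set α := Set.range x with hX
      have hXa : X ⊆ a := by rintro _ ⟨n, rfl⟩; exact hxa n
      -- X is infinite
      have hXinf : X.Infinite := by
        intro hXfin
        have hcover : Set.range (fun n => (E n : β))
            ⊆ ⋃ z ∈ X, (rimage f {z} ∩ b') := by
          rintro _ ⟨n, rfl⟩
          exact Set.mem_biUnion ⟨n, rfl⟩ ⟨⟨x n, rfl, hxf n⟩, (hEmem n).1⟩
        have hfin : (⋃ z ∈ X, (rimage f {z} ∩ b')).Finite := by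
          apply hXfin.biUnion
          intro z hz
          exact hb'.2 _ (hf z (haA (hXa hz)))
        exact Set.infinite_range_of_injective hEinj (hfin.subset hcover)
      -- X ∈ D^⊥
      have hXD : X ∈ predual A D := by
        refine ⟨fun z hz => haA (hXa hz), ?_⟩
        rintro d ⟨b, hb, rfl⟩
        set N : Set ℕ := {n | x n ∈ rdiv A f b} with hN
        have hNsub : N ⊆ (fun n => (E n : β)) ⁻¹' (b ∩ b') :=
          fun n hn => ⟨hn.2 _ (hxf n), (hEmem n).1⟩
        have hNfin : N.Finite :=
          (((hb'.2 b hb).preimage hEinj.injOn).subset hNsub)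
        have hsub : rdiv A f b ∩ X ⊆ x '' N := by
          rintro z ⟨hzd, n, rfl⟩
          exact ⟨n, hzd, rfl⟩
        exact (hNfin.image x).subset hsub
      have := ha X hXD
      rw [inter_eq_self_of_subset_left hXa] at this
      exact hXinf this
  constructor
  · rw [key, predual_triple A (predual A D) (predual_mem_subset (A := A) (F := D))]
  · exact key

end FinitenessPaper
end

section
/- Finite tensor products of finiteness spaces are directly continuous: for every finiteness space 𝒜 and every ⊑-directed family (ℬ_j)_{j∈J} of finiteness spaces, 𝒜 ⊗ (⊔_{j∈J} ℬ_j) = ⊔_{j∈J} (𝒜 ⊗ ℬ_j). -/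
open Set

namespace FinitenessPaper

/-- Finiteness inclusion order. -/
def fsLE {α : Type*} (A B : FinSpace α) : Prop := A.web ⊆ B.web ∧ A.fin ⊆ B.fin

/-- The finiteness structure of the tensor product: subsets of the product web
whose two projections are finitary. -/
def tensFin {α β : Type*} (Wa : Set α) (Fa : Set (Set α)) (Wb : Set β)
    (Fb : Set (Set β)) : Set (Set (α × β)) :=
  {c | c ⊆ Wa ×ˢ Wb ∧ Prod.fst '' c ∈ Fa ∧ Prod.snd '' c ∈ Fb}

/-- Choice of a section: any subset of the image of `c` under `f` is the exact
image of a subset of `c` on which `f` is injective. -/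
lemma exists_section {γ δ : Type*} (f : γ → δ) (c : Set γ) (s : Set δ)
    (hs : s ⊆ f '' c) :
    ∃ d : Set γ, d ⊆ c ∧ f '' d = s ∧ Set.InjOn f d := by
  choose F hFc hFx using fun x : s => hs x.2
  refine ⟨Set.range F, ?_, ?_, ?_⟩
  · rintro _ ⟨x, rfl⟩; exact hFc x
  · ext y
    constructor
    · rintro ⟨_, ⟨x, rfl⟩, rfl⟩; rw [hFx x]; exact x.2
    · intro hy; exact ⟨F ⟨y, hy⟩, ⟨⟨y, hy⟩, rfl⟩, hFx ⟨y, hy⟩⟩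
  · rintro _ ⟨x, rfl⟩ _ ⟨y, rfl⟩ h
    rw [hFx x, hFx y] at h
    cases Subtype.ext h; rfl

lemma predual_downward {α : Type*} {W : Set α} {F : Set (Set α)} {s t : Set α}
    (hst : s ⊆ t) (ht : t ∈ predual W F) : s ∈ predual W F :=
  ⟨hst.trans ht.1, fun a ha => (ht.2 a ha).subset (inter_subset_inter_right a hst)⟩

lemma finite_mem_predual {α : Type*} {W : Set α} {F : Set (Set α)} {s : Set α}
    (hsW : s ⊆ W) (hs : s.Finite) : s ∈ predual W F :=
  ⟨hsW, fun _ _ => hs.subset inter_subset_right⟩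

/-- Any element of a finiteness structure is a subset of the web. -/
lemma fin_subset_web {α : Type*} (S : FinSpace α) {a : Set α} (ha : a ∈ S.fin) :
    a ⊆ S.web := by
  rw [← S.isFin] at ha; exact ha.1

/-- Finiteness structures are downward closed. -/
lemma fin_downward {α : Type*} (S : FinSpace α) {s t : Set α} (hst : s ⊆ t)
    (ht : t ∈ S.fin) : s ∈ S.fin := by
  rw [← S.isFin] at ht ⊢; exact predual_downward hst ht

/-- Finite subsets of the web are finitary. -/
lemma finite_mem_fin {α : Type*} (S : FinSpace α) {s : Set α} (hsW : s ⊆ S.web)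
    (hs : s.Finite) : s ∈ S.fin := by
  rw [← S.isFin]; exact finite_mem_predual hsW hs

/-- A finite subset of a directed union is either empty or contained in one member. -/
lemma directed_cover {J β : Type*} {W : J → Set β} (h : Directed (· ⊆ ·) W) {s : Set β}
    (hfin : s.Finite) (hsub : s ⊆ ⋃ j, W j) :
    s = ∅ ∨ ∃ j, s ⊆ W j := by
  refine Set.Finite.induction_on (motive := fun s _ => s ⊆ ⋃ j, W j → s = ∅ ∨ ∃ j, s ⊆ W j) s hfin (fun _ => Or.inl rfl)
    (fun {a s} _ _ ih hsub => ?_) hsub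
  rcases mem_iUnion.1 (hsub (mem_insert a s)) with ⟨j1, hj1⟩
  rcases ih ((subset_insert a s).trans hsub) with rfl | ⟨j2, hj2⟩
  · exact Or.inr ⟨j1, by simpa using hj1⟩
  · rcases h j1 j2 with ⟨k, hk1, hk2⟩
    exact Or.inr ⟨k, insert_subset (hk1 hj1) (hj2.trans hk2)⟩

/-- Finite tensor products are directly continuous: for every finiteness space
`𝒜` and every `⊑`-directed family `(ℬⱼ)` of finiteness spaces,
`𝒜 ⊗ (⊔ⱼ ℬⱼ) = ⊔ⱼ (𝒜 ⊗ ℬⱼ)` (equality of webs and of finiteness structures). -/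
theorem tensor_directly_continuous {α β : Type*} {J : Type*}
    (A : FinSpace α) (B : J → FinSpace β) (hdir : Directed fsLE B) :
    let Wsup : Set β := ⋃ j, (B j).web
    let Fsup : Set (Set β) := predual Wsup (predual Wsup (⋃ j, (B j).fin))
    -- the webs agree
    (A.web ×ˢ Wsup = ⋃ j, A.web ×ˢ (B j).web) ∧
    -- the finiteness structures agree
    (tensFin A.web A.fin Wsup Fsup
      = predual (A.web ×ˢ Wsup) (predual (A.web ×ˢ Wsup)
          (⋃ j, tensFin A.web A.fin (B j).web (B j).fin))) := by
  intro Wsup Fsup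
  have hdirweb : Directed (· ⊆ ·) (fun j => (B j).web) :=
    fun i j => (hdir i j).imp fun k hk => ⟨hk.1.1, hk.2.1⟩
  refine ⟨Set.prod_iUnion, Set.Subset.antisymm ?_ ?_⟩
  · -- tensFin over the sup is included in the biorthogonal of the union
    rintro c ⟨hcX, hc1, hc2⟩
    have hc2' : Prod.snd '' c ∈ predual Wsup (predual Wsup (⋃ j, (B j).fin)) := hc2
    refine ⟨hcX, ?_⟩
    rintro u ⟨huX, hufin⟩
    -- Step A : the second projection of u ∩ c is finite
    have hsnd_mem : Prod.snd '' (u ∩ c) ∈ predual Wsup (⋃ j, (B j).fin) := by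
      constructor
      · rintro _ ⟨p, hp, rfl⟩; exact (hcX hp.2).2
      · intro b hb
        rcases mem_iUnion.1 hb with ⟨j, hbj⟩
        obtain ⟨d, hdc, hds, -⟩ :=
          exists_section Prod.snd (u ∩ c) (b ∩ Prod.snd '' (u ∩ c)) inter_subset_right
        have hdG : d ∈ ⋃ j, tensFin A.web A.fin (B j).web (B j).fin := by
          refine mem_iUnion.2 ⟨j, ?_, ?_, ?_⟩
          · intro p hp
            have hp2 : p.2 ∈ b ∩ Prod.snd '' (u ∩ c) := by
              rw [← hds]; exact mem_image_of_mem _ hp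
            exact ⟨(hcX (hdc hp).2).1, fin_subset_web (B j) hbj hp2.1⟩
          · exact fin_downward A (image_mono (hdc.trans inter_subset_right)) hc1
          · rw [hds]; exact fin_downward (B j) inter_subset_left hbj
        have hdfin : d.Finite :=
          (hufin d hdG).subset fun p hp => ⟨hp, (hdc hp).1⟩
        rw [← hds]; exact hdfin.image _
    have hAfin : (Prod.snd '' (u ∩ c)).Finite := by
      have h := hc2'.2 _ hsnd_mem
      exact h.subset fun y hy => ⟨hy, image_mono (f := Prod.snd) inter_subset_right hy⟩
    -- Step B : the first projection of u ∩ c is finite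
    have hfst_mem : Prod.fst '' (u ∩ c) ∈ predual A.web A.fin := by
      constructor
      · rintro _ ⟨p, hp, rfl⟩; exact (hcX hp.2).1
      · intro a ha
        obtain ⟨d, hdc, hds, -⟩ :=
          exists_section Prod.fst (u ∩ c) (a ∩ Prod.fst '' (u ∩ c)) inter_subset_right
        have hsndd : (Prod.snd '' d).Finite := hAfin.subset (image_mono hdc)
        have hsndsub : Prod.snd '' d ⊆ ⋃ j, (B j).web := by
          rintro _ ⟨p, hp, rfl⟩; exact (hcX (hdc hp).2).2
        rcases directed_cover hdirweb hsndd hsndsub with hemp | ⟨j0, hj0⟩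
        · have hde : d = ∅ := by
            rcases eq_empty_or_nonempty d with h | ⟨p, hp⟩
            · exact h
            · exact absurd (mem_image_of_mem Prod.snd hp)
                (by rw [hemp]; exact notMem_empty _)
          rw [← hds, hde]
          simp
        · have hdG : d ∈ ⋃ j, tensFin A.web A.fin (B j).web (B j).fin := by
            refine mem_iUnion.2 ⟨j0, ?_, ?_, ?_⟩
            · intro p hp
              exact ⟨(hcX (hdc hp).2).1, hj0 (mem_image_of_mem _ hp)⟩
            · rw [hds]; exact fin_downward A inter_subset_left ha
            · exact finite_mem_fin (B j0) hj0 hsndd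
          have hdfin : d.Finite :=
            (hufin d hdG).subset fun p hp => ⟨hp, (hdc hp).1⟩
          rw [← hds]; exact hdfin.image _
    have hBfin : (Prod.fst '' (u ∩ c)).Finite := by
      have h := hfst_mem.2 _ hc1
      exact h.subset fun y hy => ⟨image_mono (f := Prod.fst) inter_subset_right hy, hy⟩
    exact (hBfin.prod hAfin).subset fun p hp =>
      ⟨mem_image_of_mem _ hp, mem_image_of_mem _ hp⟩
  · -- the biorthogonal of the union is included in tensFin over the sup
    rintro c ⟨hcX, hcd⟩
    refine ⟨hcX, ?_, ?_⟩
    · -- first projection is finitary in A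
      rw [← A.isFin]
      refine ⟨by rintro _ ⟨p, hp, rfl⟩; exact (hcX hp).1, ?_⟩
      intro a' ha'
      obtain ⟨d, hdc, hds, hinj⟩ :=
        exists_section Prod.fst c (a' ∩ Prod.fst '' c) inter_subset_right
      have hdmem : d ∈ predual (A.web ×ˢ Wsup)
          (⋃ j, tensFin A.web A.fin (B j).web (B j).fin) := by
        refine ⟨hdc.trans hcX, ?_⟩
        intro e he
        rcases mem_iUnion.1 he with ⟨j, hej⟩
        have h1 : (Prod.fst '' e ∩ a').Finite := ha'.2 _ hej.2.1
        refine Set.Finite.of_finite_image (h1.subset ?_) (hinj.mono inter_subset_right)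
        rintro _ ⟨p, hp, rfl⟩
        have hp1 : p.1 ∈ a' ∩ Prod.fst '' c := by
          rw [← hds]; exact mem_image_of_mem _ hp.2
        exact ⟨mem_image_of_mem _ hp.1, hp1.1⟩
      have hdfin : d.Finite := (hcd d hdmem).subset fun p hp => ⟨hp, hdc hp⟩
      rw [← hds]; exact hdfin.image _
    · -- second projection is finitary in the sup
      show Prod.snd '' c ∈ predual Wsup (predual Wsup (⋃ j, (B j).fin))
      refine ⟨by rintro _ ⟨p, hp, rfl⟩; exact (hcX hp).2, ?_⟩
      intro b' hb'
      obtain ⟨d, hdc, hds, hinj⟩ :=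
        exists_section Prod.snd c (b' ∩ Prod.snd '' c) inter_subset_right
      have hdmem : d ∈ predual (A.web ×ˢ Wsup)
          (⋃ j, tensFin A.web A.fin (B j).web (B j).fin) := by
        refine ⟨hdc.trans hcX, ?_⟩
        intro e he
        rcases mem_iUnion.1 he with ⟨j, hej⟩
        have h1 : (Prod.snd '' e ∩ b').Finite := hb'.2 _ (mem_iUnion.2 ⟨j, hej.2.2⟩)
        refine Set.Finite.of_finite_image (h1.subset ?_) (hinj.mono inter_subset_right)
        rintro _ ⟨p, hp, rfl⟩
        have hp2 : p.2 ∈ b' ∩ Prod.snd '' c := by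
          rw [← hds]; exact mem_image_of_mem _ hp.2
        exact ⟨mem_image_of_mem _ hp.1, hp2.1⟩
      have hdfin : d.Finite := (hcd d hdmem).subset fun p hp => ⟨hp, hdc hp⟩
      rw [← hds]; exact hdfin.image _

end FinitenessPaper
end

section
/- Injections into and case analysis on the lifted sum are finitary: let (𝒜_i)_{i∈I} and ℬ be finiteness spaces. Define the lifted sum ⊕ˡ(𝒜_i) as the finiteness space with web I ∪ Σ_{i∈I}|𝒜_i| (disjoint union, Σ_{i∈I}A_i = {(i,α) : i ∈ I, α ∈ A_i}) and finitary subsets {J ∪ Σ_{i∈K} a_i : J ∪ K a finite subset of I and a_i ∈ F(𝒜_i) for all i ∈ K}. Then: (1) for each i ∈ I, the multirelation inj_i = {([], i)} ∪ {([α], (i,α)) : α ∈ |𝒜_i|} belongs to F(𝒜_i ⇒ ⊕ˡ(𝒜_j)); (2) the multirelation case = {([i] + [(i,α_1),…,(i,α_n)], ([(i, ([α_1,…,α_n], β))], β)) : i ∈ I, n ∈ ℕ, α_1,…,α_n ∈ |𝒜_i|, β ∈ |ℬ|} belongs to F(⊕ˡ(𝒜_j) ⇒ ((&_{i∈I}(𝒜_i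 ⇒ ℬ)) ⇒ ℬ)). -/
open Set

namespace FinitenessPaper

/-- `a^! = M(a)`: the set of finite multisets all of whose elements lie in `a`. -/
def bangSet {α : Type*} (a : Set α) : Set (Multiset α) := {μ | ∀ x ∈ μ, x ∈ a}

/-- The finiteness structure of the exponential `!`, given by web and structure. -/
def bangFinS {α : Type*} (W : Set α) (F : Set (Set α)) : Set (Set (Multiset α)) :=
  {s | s ⊆ bangSet W ∧ (⋃ μ ∈ s, {x : α | x ∈ μ}) ∈ F}

/-- The finiteness structure of `𝒜 ⇒ ℬ = !𝒜 ⊸ ℬ = (!𝒜 ⊗ ℬ^⊥)^⊥`,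
given by webs and structures. -/
def impFinS {α β : Type*} (Wa : Set α) (Fa : Set (Set α)) (Wb : Set β)
    (Fb : Set (Set β)) : Set (Set (Multiset α × β)) :=
  predual (bangSet Wa ×ˢ Wb)
    (tensFin (bangSet Wa) (bangFinS Wa Fa) Wb (predual Wb Fb))

/-- The web of the lifted sum `⊕ˡᵢ 𝒜ᵢ`: the tokens `i ∈ I` together with the
pairs `(i, α)` with `α ∈ |𝒜ᵢ|`. -/
def loplusWeb {α : Type*} {I : Type*} (𝒜 : I → FinSpace α) : Set (I ⊕ I × α) :=
  Set.range Sum.inl ∪ {x | ∃ i a, a ∈ (𝒜 i).web ∧ x = Sum.inr (i, a)}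

/-- The finiteness structure of the lifted sum: sets of the form
`J ∪ Σ_{i∈K} aᵢ` with `J ∪ K` a finite subset of `I` and `aᵢ ∈ F(𝒜ᵢ)`. -/
def loplusFin {α : Type*} {I : Type*} (𝒜 : I → FinSpace α) :
    Set (Set (I ⊕ I × α)) :=
  {s | ∃ (J K : Set I) (a : I → Set α), (J ∪ K).Finite ∧
    (∀ i ∈ K, a i ∈ (𝒜 i).fin) ∧
    s = Sum.inl '' J ∪ ⋃ i ∈ K, (fun x => (Sum.inr (i, x) : I ⊕ I × α)) '' a i}

/-- The injection `injᵢ = {([], i)} ∪ {([α], (i,α)) : α ∈ |𝒜ᵢ|}`. -/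
def injRel {α : Type*} {I : Type*} (𝒜 : I → FinSpace α) (i : I) :
    Set (Multiset α × (I ⊕ I × α)) :=
  {((0 : Multiset α), Sum.inl i)} ∪
    {q | ∃ a ∈ (𝒜 i).web, q = (({a} : Multiset α), (Sum.inr (i, a) : I ⊕ I × α))}

/-- The web of the product `&ᵢ (𝒜ᵢ ⇒ ℬ)`. -/
def withImpWeb {α β : Type*} {I : Type*} (𝒜 : I → FinSpace α) (B : FinSpace β) :
    Set (I × (Multiset α × β)) :=
  {q | q.2 ∈ bangSet (𝒜 q.1).web ×ˢ B.web}

/-- The finiteness structure of the product `&ᵢ (𝒜ᵢ ⇒ ℬ)`: sets all of whose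
restrictions are finitary. -/
def withImpFin {α β : Type*} {I : Type*} (𝒜 : I → FinSpace α) (B : FinSpace β) :
    Set (Set (I × (Multiset α × β))) :=
  {c | c ⊆ withImpWeb 𝒜 B ∧
    ∀ i, {p | (i, p) ∈ c} ∈ impFinS (𝒜 i).web (𝒜 i).fin B.web B.fin}

/-- The case-analysis multirelation
`case = {([i] + [(i,α₁),…,(i,αₙ)], ([(i, ([α₁,…,αₙ], β))], β))}`. -/
def caseRel {α β : Type*} {I : Type*} (𝒜 : I → FinSpace α) (B : FinSpace β) :
    Set (Multiset (I ⊕ I × α) × (Multiset (I × (Multiset α × β)) × β)) :=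
  {q | ∃ (i : I) (L : List α) (b : β), (∀ x ∈ L, x ∈ (𝒜 i).web) ∧ b ∈ B.web ∧
    q = ((Sum.inl i : I ⊕ I × α) ::ₘ
          ((L.map fun x => (Sum.inr (i, x) : I ⊕ I × α)) : Multiset (I ⊕ I × α)),
        (({(i, ((L : Multiset α), b))} : Multiset (I × (Multiset α × β))), b))}

lemma predual_down {α : Type*} {A : Set α} {F : Set (Set α)} {a a' : Set α}
    (h : a ∈ predual A F) (hsub : a' ⊆ a) : a' ∈ predual A F :=
  ⟨hsub.trans h.1, fun b hb => (h.2 b hb).subset fun x hx => ⟨hx.1, hsub hx.2⟩⟩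

lemma fin_subset_web_s19 {α : Type*} (𝒜 : FinSpace α) {s : Set α} (hs : s ∈ 𝒜.fin) :
    s ⊆ 𝒜.web := by
  rw [← 𝒜.isFin] at hs; exact hs.1

lemma fin_down {α : Type*} (𝒜 : FinSpace α) {s t : Set α} (hs : s ∈ 𝒜.fin)
    (h : t ⊆ s) : t ∈ 𝒜.fin := by
  rw [← 𝒜.isFin] at hs ⊢; exact predual_down hs h

lemma empty_fin {α : Type*} (𝒜 : FinSpace α) : (∅ : Set α) ∈ 𝒜.fin := by
  rw [← 𝒜.isFin]; exact ⟨empty_subset _, fun a _ => by simp⟩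

/-- The key auxiliary fact: sets of the form
`{({(i,(L,b))}, b) : i ∈ J, L ∈ (a i)^!, b ∈ |ℬ|}` with `J` finite and
`a i ∈ F(𝒜ᵢ)` are finitary in `(&ᵢ (𝒜ᵢ ⇒ ℬ)) ⇒ ℬ`. -/
lemma dRel_fin {α β : Type*} {I : Type*} (𝒜 : I → FinSpace α) (B : FinSpace β)
    {J : Set I} (hJ : J.Finite) {a : I → Set α} (ha : ∀ i ∈ J, a i ∈ (𝒜 i).fin) :
    {q : Multiset (I × (Multiset α × β)) × β | ∃ i ∈ J, ∃ L : Multiset α,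
      (∀ x ∈ L, x ∈ a i) ∧ ∃ b ∈ B.web, q = ({(i, (L, b))}, b)} ∈
      impFinS (withImpWeb 𝒜 B) (withImpFin 𝒜 B) B.web B.fin := by
  constructor
  · rintro q ⟨i, hi, L, hL, b, hb, rfl⟩
    refine ⟨?_, hb⟩
    intro x hx
    rw [Multiset.mem_singleton] at hx
    subst hx
    exact ⟨fun y hy => fin_subset_web_s19 (𝒜 i) (ha i hi) (hL y hy), hb⟩
  · rintro e ⟨he1, he2, he3⟩
    set v : Set (I × (Multiset α × β)) := ⋃ μ ∈ Prod.fst '' e, {x | x ∈ μ} with hvdef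
    have hvm : v ∈ withImpFin 𝒜 B := he2.2
    have key : ∀ i ∈ J,
        ((bangSet (a i) ×ˢ (Prod.snd '' e)) ∩ {p | (i, p) ∈ v}).Finite := by
      intro i hi
      refine (hvm.2 i).2 _ ⟨?_, ?_, ?_⟩
      · rintro ⟨L, b⟩ ⟨hL, hb⟩
        exact ⟨fun x hx => fin_subset_web_s19 (𝒜 i) (ha i hi) (hL x hx), he3.1 hb⟩
      · refine ⟨?_, fin_down (𝒜 i) (ha i hi) ?_⟩
        · rintro μ ⟨⟨L, b⟩, ⟨hL, _⟩, rfl⟩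
          exact fun x hx => fin_subset_web_s19 (𝒜 i) (ha i hi) (hL x hx)
        · rintro x hx
          simp only [mem_iUnion] at hx
          obtain ⟨μ, ⟨⟨L, b⟩, ⟨hL, _⟩, rfl⟩, hxμ⟩ := hx
          exact hL x hxμ
      · refine predual_down he3 ?_
        rintro b ⟨⟨L, b'⟩, ⟨_, hb⟩, rfl⟩
        exact hb
    have hSfin : (⋃ i ∈ J, Prod.mk i ''
        ((bangSet (a i) ×ˢ (Prod.snd '' e)) ∩ {p | (i, p) ∈ v})).Finite :=
      hJ.biUnion fun i hi => (key i hi).image _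
    refine Set.Finite.of_finite_image (f := Prod.fst)
      ((hSfin.image fun p => ({p} : Multiset (I × (Multiset α × β)))).subset ?_) ?_
    · rintro _ ⟨q, ⟨hqe, i, hi, L, hL, b, hb, rfl⟩, rfl⟩
      refine ⟨(i, (L, b)), ?_, rfl⟩
      simp only [mem_iUnion]
      refine ⟨i, hi, (L, b), ⟨⟨hL, ⟨_, hqe, rfl⟩⟩, ?_⟩, rfl⟩
      simp only [v, mem_iUnion]
      exact ⟨{(i, (L, b))}, ⟨_, hqe, rfl⟩, Multiset.mem_singleton_self _⟩
    · rintro q ⟨_, i, hi, L, hL, b, hb, rfl⟩ q' ⟨_, i', hi', L', hL', b', hb', rfl⟩ hfst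
      simp only [Multiset.singleton_inj, Prod.mk.injEq] at hfst
      simp [hfst.1, hfst.2.1, hfst.2.2]

/-- Injections into, and case analysis on, the lifted sum are finitary:
`injᵢ ∈ F(𝒜ᵢ ⇒ ⊕ˡⱼ 𝒜ⱼ)` and
`case ∈ F(⊕ˡⱼ 𝒜ⱼ ⇒ ((&ᵢ (𝒜ᵢ ⇒ ℬ)) ⇒ ℬ))`. -/
theorem inj_case_finitary {α β : Type*} {I : Type*}
    (𝒜 : I → FinSpace α) (B : FinSpace β) :
    (∀ i : I, injRel 𝒜 i ∈
      impFinS (𝒜 i).web (𝒜 i).fin (loplusWeb 𝒜) (loplusFin 𝒜)) ∧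
    caseRel 𝒜 B ∈
      impFinS (loplusWeb 𝒜) (loplusFin 𝒜)
        (bangSet (withImpWeb 𝒜 B) ×ˢ B.web)
        (impFinS (withImpWeb 𝒜 B) (withImpFin 𝒜 B) B.web B.fin) := by
  classical
  constructor
  · -- Part 1: the injections are finitary.
    intro i
    constructor
    · rintro q (hq | ⟨x, hx, rfl⟩)
      · rw [mem_singleton_iff] at hq
        subst hq
        exact ⟨fun y hy => absurd hy (Multiset.notMem_zero y),
          Or.inl ⟨i, rfl⟩⟩
      · refine ⟨fun y hy => ?_, Or.inr ⟨i, x, hx, rfl⟩⟩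
        rw [Multiset.mem_singleton] at hy
        subst hy; exact hx
    · rintro c ⟨hc1, hc2, hc3⟩
      set u : Set α := ⋃ μ ∈ Prod.fst '' c, {x | x ∈ μ} with hudef
      have hu : u ∈ (𝒜 i).fin := hc2.2
      have hs : (Sum.inl '' ({i} : Set I) ∪ ⋃ j ∈ ({i} : Set I),
          (fun x => (Sum.inr (j, x) : I ⊕ I × α)) '' u) ∈ loplusFin 𝒜 := by
        refine ⟨{i}, {i}, fun _ => u, by simp, ?_, rfl⟩
        intro j hj
        rw [mem_singleton_iff] at hj
        subst hj; exact hu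
      have hfin := hc3.2 _ hs
      refine Set.Finite.of_finite_image (f := Prod.snd) (hfin.subset ?_) ?_
      · rintro _ ⟨q, ⟨hqc, hq | ⟨x, hx, rfl⟩⟩, rfl⟩
        · rw [mem_singleton_iff] at hq
          subst hq
          exact ⟨Or.inl ⟨i, rfl, rfl⟩, ⟨_, hqc, rfl⟩⟩
        · refine ⟨Or.inr ?_, ⟨_, hqc, rfl⟩⟩
          simp only [mem_iUnion]
          refine ⟨i, rfl, x, ?_, rfl⟩
          simp only [u, mem_iUnion]
          exact ⟨{x}, ⟨_, hqc, rfl⟩, Multiset.mem_singleton_self _⟩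
      · rintro q ⟨_, hq | ⟨x, hx, rfl⟩⟩ q' ⟨_, hq' | ⟨x', hx', rfl⟩⟩ hsnd
        · rw [mem_singleton_iff] at hq hq'; rw [hq, hq']
        · rw [mem_singleton_iff] at hq
          subst hq; simp at hsnd
        · rw [mem_singleton_iff] at hq'
          subst hq'; simp at hsnd
        · simp only [Sum.inr.injEq, Prod.mk.injEq] at hsnd
          rw [hsnd.2]
  · -- Part 2: case analysis is finitary.
    constructor
    · rintro q ⟨i, L, b, hL, hb, rfl⟩
      refine ⟨?_, ?_, hb⟩
      · intro x hx
        rw [Multiset.mem_cons] at hx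
        rcases hx with rfl | hx
        · exact Or.inl ⟨i, rfl⟩
        · rw [Multiset.mem_coe, List.mem_map] at hx
          obtain ⟨y, hy, rfl⟩ := hx
          exact Or.inr ⟨i, y, hL y hy, rfl⟩
      · intro x hx
        rw [Multiset.mem_singleton] at hx
        subst hx
        exact ⟨fun y hy => hL y (by simpa using hy), hb⟩
    · rintro c ⟨hc1, hc2, hc3⟩
      obtain ⟨J, K, a, hJK, ha, huEq⟩ := hc2.2
      set a' : I → Set α := fun i => if i ∈ K then a i else ∅ with ha'def
      have ha' : ∀ i ∈ J ∪ K, a' i ∈ (𝒜 i).fin := by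
        intro i _
        by_cases hiK : i ∈ K
        · simpa [a', hiK] using ha i hiK
        · simpa [a', hiK] using empty_fin (𝒜 i)
      have hfin := hc3.2 _ (dRel_fin 𝒜 B hJK ha')
      refine Set.Finite.of_finite_image (f := Prod.snd) (hfin.subset ?_) ?_
      · rintro _ ⟨q, ⟨hqc, i, L, b, hL, hb, rfl⟩, rfl⟩
        have hmem : ∀ x : I ⊕ I × α,
            x ∈ ((Sum.inl i : I ⊕ I × α) ::ₘ
              ((L.map fun x => (Sum.inr (i, x) : I ⊕ I × α)) :
                Multiset (I ⊕ I × α))) →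
            x ∈ Sum.inl '' J ∪
              ⋃ j ∈ K, (fun x => (Sum.inr (j, x) : I ⊕ I × α)) '' a j := by
          intro x hx
          rw [← huEq]
          simp only [mem_iUnion]
          exact ⟨_, ⟨_, hqc, rfl⟩, hx⟩
        have hiJ : i ∈ J ∪ K := by
          have := hmem (Sum.inl i) (Multiset.mem_cons_self _ _)
          rcases this with ⟨j, hj, hj2⟩ | h
          · rw [Sum.inl.injEq] at hj2
            exact Or.inl (hj2 ▸ hj)
          · simp only [mem_iUnion] at h
            obtain ⟨j, _, y, _, h2⟩ := h
            exact absurd h2 (by simp)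
        refine ⟨⟨i, hiJ, (L : Multiset α), ?_, b, hb, rfl⟩, ⟨_, hqc, rfl⟩⟩
        intro x hx
        rw [Multiset.mem_coe] at hx
        have := hmem (Sum.inr (i, x)) (by
          rw [Multiset.mem_cons]
          exact Or.inr (by rw [Multiset.mem_coe, List.mem_map]; exact ⟨x, hx, rfl⟩))
        rcases this with ⟨j, _, hj2⟩ | h
        · exact absurd hj2 (by simp)
        · simp only [mem_iUnion] at h
          obtain ⟨j, hjK, y, hy, h2⟩ := h
          simp only [Sum.inr.injEq, Prod.mk.injEq] at h2
          obtain ⟨rfl, rfl⟩ := h2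
          simpa [a', hjK] using hy
      · rintro q ⟨_, i, L, b, hL, hb, rfl⟩ q' ⟨_, i', L', b', hL', hb', rfl⟩ hsnd
        simp only [Prod.mk.injEq, Multiset.singleton_inj] at hsnd
        obtain ⟨⟨rfl, hLL, rfl⟩, -⟩ := hsnd
        have h1 : ((L.map fun x => (Sum.inr (i, x) : I ⊕ I × α)) :
            Multiset (I ⊕ I × α)) =
            ((L'.map fun x => (Sum.inr (i, x) : I ⊕ I × α)) :
            Multiset (I ⊕ I × α)) := by
          rw [← Multiset.map_coe, ← Multiset.map_coe, hLL]
        rw [h1, hLL]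

end FinitenessPaper
end
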